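/- For all positive integers m and n, there exist positive integers a_1, ..., a_n such that C(m+n, n) = a_1 ⋯ a_n, a_i divides m+i for each 1 ≤ i ≤ n, and gcd(a_i, a_j) = 1 for all 1 ≤ i ≠ j ≤ n (here the a_i are allowed to equal 1). -/

import Mathlib

private lemma carry_lemma {p m n k : ℕ} (hp : p.Prime)
    (hk : k = (Nat.choose (m + n) n).factorization p) (hk1 : 1 ≤ k) :
    ∃ s, k ≤ s ∧ p ^ s ≤ n % p ^ s + m % p ^ s := by
  haveI : Fact p.Prime := ⟨hp⟩
  have hb : Nat.log p (m + n) < Nat.log p (m + n) + 1 := Nat.lt_succ_self _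
  have hval := padicValNat_choose' (p := p) (n := m) (k := n)
    (b := Nat.log p (m + n) + 1) hb
  rw [Nat.factorization_def _ hp] at hk
  set S := (Finset.Ico 1 (Nat.log p (m + n) + 1)).filter
    (fun i => p ^ i ≤ n % p ^ i + m % p ^ i) with hS
  have hcard : S.card = k := by rw [hk, hval]
  have hne : S.Nonempty := by rw [← Finset.card_pos, hcard]; omega
  set s := S.max' hne with hs
  have hsmem : s ∈ S := S.max'_mem hne
  have hsub : S ⊆ Finset.Icc 1 s := by
    intro x hx
    have h1 := (Finset.mem_filter.1 hx).1
    exact Finset.mem_Icc.2 ⟨(Finset.mem_Ico.1 h1).1, S.le_max' x hx⟩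
  have hks : k ≤ s := by
    have := Finset.card_le_card hsub
    rw [hcard, Nat.card_Icc] at this
    omega
  exact ⟨s, hks, (Finset.mem_filter.1 hsmem).2⟩

private lemma exists_index {p m n : ℕ} (hp : p.Prime)
    (hk1 : 1 ≤ (Nat.choose (m + n) n).factorization p) :
    ∃ i ∈ Finset.Icc 1 n, p ^ (Nat.choose (m + n) n).factorization p ∣ m + i := by
  set k := (Nat.choose (m + n) n).factorization p with hkdef
  obtain ⟨s, hks, hcarry⟩ := carry_lemma hp hkdef hk1
  have hpk : 0 < p ^ k := Nat.pow_pos (n := k) hp.pos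
  have hps : 0 < p ^ s := Nat.pow_pos (n := s) hp.pos
  have hfac : p ^ s = p ^ k * p ^ (s - k) := by
    rw [← pow_add]; congr 1; omega
  have hrR : m % p ^ s % p ^ k = m % p ^ k := Nat.mod_mod_of_dvd m (pow_dvd_pow p hks)
  have hRlt : m % p ^ s < p ^ s := Nat.mod_lt _ hps
  have hrange : m % p ^ s / p ^ k < p ^ (s - k) :=
    Nat.div_lt_of_lt_mul (by rw [← hfac]; exact hRlt)
  have h3 : p ^ k * (m % p ^ s / p ^ k) + m % p ^ k = m % p ^ s := by
    conv_rhs => rw [← Nat.div_add_mod (m % p ^ s) (p ^ k)]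
    rw [hrR]
  have h2 : p ^ k * (m % p ^ s / p ^ k) + p ^ k ≤ p ^ s := by
    calc p ^ k * (m % p ^ s / p ^ k) + p ^ k = p ^ k * (m % p ^ s / p ^ k + 1) := by ring
      _ ≤ p ^ k * p ^ (s - k) := Nat.mul_le_mul_left _ (Nat.succ_le_of_lt hrange)
      _ = p ^ s := hfac.symm
  have hmodn : n % p ^ s ≤ n := Nat.mod_le _ _
  have hrlt : m % p ^ k < p ^ k := Nat.mod_lt _ hpk
  generalize p ^ k * (m % p ^ s / p ^ k) = B at h2 h3
  refine ⟨p ^ k - m % p ^ k, Finset.mem_Icc.2 ⟨by omega, by omega⟩, ?_⟩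
  have hdecomp : m + (p ^ k - m % p ^ k) = p ^ k * (m / p ^ k) + p ^ k := by
    have := Nat.div_add_mod m (p ^ k)
    omega
  rw [hdecomp]
  exact dvd_add (dvd_mul_right _ _) dvd_rfl

private lemma prod_pp_dvd {S : Finset ℕ} {g : ℕ → ℕ} {x : ℕ}
    (hS : ∀ p ∈ S, Nat.Prime p) (hd : ∀ p ∈ S, p ^ g p ∣ x) :
    (∏ p ∈ S, p ^ g p) ∣ x := by
  classical
  induction S using Finset.induction_on with
  | empty => simp
  | @insert a s ha ih =>
    rw [Finset.prod_insert ha]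
    have hap : a.Prime := hS a (Finset.mem_insert_self a s)
    apply Nat.Coprime.mul_dvd_of_dvd_of_dvd
    · apply Nat.Coprime.prod_right
      intro q hq
      have hqp : q.Prime := hS q (Finset.mem_insert_of_mem hq)
      have hne : a ≠ q := fun h => ha (h ▸ hq)
      exact Nat.Coprime.pow _ _ ((Nat.coprime_primes hap hqp).2 hne)
    · exact hd a (Finset.mem_insert_self a s)
    · exact ih (fun p hp => hS p (Finset.mem_insert_of_mem hp))
        (fun p hp => hd p (Finset.mem_insert_of_mem hp))

/-- Every binomial coefficient `C(m+n, n)` can be written as a product of pairwise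
coprime positive integers `a_1, ..., a_n` with `a_i ∣ m+i` (the `a_i` may be `1`). -/
theorem choose_eq_prod_coprime_divisors
    (m n : ℕ) (hm : 0 < m) (hn : 0 < n) :
    ∃ a : ℕ → ℕ,
      Nat.choose (m + n) n = ∏ i ∈ Finset.Icc 1 n, a i ∧
      (∀ i ∈ Finset.Icc 1 n, a i ∣ (m + i) ∧ 0 < a i) ∧
      (∀ i ∈ Finset.Icc 1 n, ∀ j ∈ Finset.Icc 1 n, i ≠ j →
        Nat.Coprime (a i) (a j)) := by
  classical
  set C := Nat.choose (m + n) n with hCdef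
  have hC : C ≠ 0 := (Nat.choose_pos (Nat.le_add_left n m)).ne'
  have hchoice : ∀ p ∈ C.factorization.support, ∃ i ∈ Finset.Icc 1 n,
      p ^ C.factorization p ∣ m + i := by
    intro p hp
    have hpp : p.Prime := Nat.prime_of_mem_primeFactors
      (by rwa [Nat.support_factorization] at hp)
    have hk1 : 1 ≤ C.factorization p :=
      Nat.one_le_iff_ne_zero.2 (Finsupp.mem_support_iff.1 hp)
    exact exists_index hpp hk1
  choose! F hF1 hF2 using hchoice
  have hprimes : ∀ p ∈ C.factorization.support, p.Prime := fun p hp =>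
    Nat.prime_of_mem_primeFactors (by rwa [Nat.support_factorization] at hp)
  refine ⟨fun i => ∏ p ∈ C.factorization.support.filter (fun p => F p = i),
      p ^ C.factorization p, ?_, ?_, ?_⟩
  · rw [Finset.prod_fiberwise_of_maps_to hF1]
    conv_lhs => rw [← Nat.factorization_prod_pow_eq_self hC]
    rfl
  · intro i hi
    constructor
    · apply prod_pp_dvd
      · exact fun p hp => hprimes p (Finset.mem_filter.1 hp).1
      · intro p hp
        obtain ⟨hps, hpi⟩ := Finset.mem_filter.1 hp
        exact hpi ▸ hF2 p hps
    · apply Finset.prod_pos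
      intro p hp
      exact pow_pos (hprimes p (Finset.mem_filter.1 hp).1).pos _
  · intro i hi j hj hij
    apply Nat.Coprime.prod_left
    intro p hp
    apply Nat.Coprime.prod_right
    intro q hq
    obtain ⟨hps, hpi⟩ := Finset.mem_filter.1 hp
    obtain ⟨hqs, hqj⟩ := Finset.mem_filter.1 hq
    have hne : p ≠ q := fun h => hij (by rw [← hpi, ← hqj, h])
    exact Nat.Coprime.pow _ _ ((Nat.coprime_primes (hprimes p hps) (hprimes q hqs)).2 hne)
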